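/- Let f : X → Y be a continuous open surjection between topological spaces. If X is basically disconnected, then Y is basically disconnected. -/

import Mathlib

open Set Topology Pointwise

universe u v w

/-- A cozero set: the set where some continuous real-valued function is nonzero. -/
def IsCozeroSet {X : Type u} [TopologicalSpace X] (s : Set X) : Prop :=
  ∃ f : X → ℝ, Continuous f ∧ s = {x | f x ≠ 0}

/-- An F-space: any two disjoint cozero sets are completely separated. -/
def IsFSpace (X : Type u) [TopologicalSpace X] : Prop :=
  ∀ s t : Set X, IsCozeroSet s → IsCozeroSet t → Disjoint s t →
    ∃ g : X → ℝ, Continuous g ∧ (∀ x, g x ∈ Set.Icc (0 : ℝ) 1) ∧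
      (∀ x ∈ s, g x = 0) ∧ (∀ x ∈ t, g x = 1)

/-- An F'-space: any two disjoint cozero sets have disjoint closures. -/
def IsFPrimeSpace (X : Type u) [TopologicalSpace X] : Prop :=
  ∀ s t : Set X, IsCozeroSet s → IsCozeroSet t → Disjoint s t →
    Disjoint (closure s) (closure t)

/-- A basically disconnected space: the closure of every cozero set is open. -/
def IsBasicallyDisconnected (X : Type u) [TopologicalSpace X] : Prop :=
  ∀ s : Set X, IsCozeroSet s → IsOpen (closure s)

/-- A P-space: every Gδ set is open. -/
def IsPSpace (X : Type u) [TopologicalSpace X] : Prop :=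
  ∀ s : Set X, IsGδ s → IsOpen s

/-- Covering dimension at most `n`: every finite open cover has a finite open
refinement in which every point belongs to at most `n + 1` members. -/
def CovDimLE (X : Type u) [TopologicalSpace X] (n : ℕ) : Prop :=
  ∀ 𝒰 : Finset (Set X), (∀ U ∈ 𝒰, IsOpen U) → ⋃₀ (𝒰 : Set (Set X)) = Set.univ →
    ∃ 𝒱 : Finset (Set X), (∀ V ∈ 𝒱, IsOpen V) ∧ ⋃₀ (𝒱 : Set (Set X)) = Set.univ ∧
      (∀ V ∈ 𝒱, ∃ U ∈ 𝒰, V ⊆ U) ∧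
      ∀ x : X, {V : Set X | V ∈ 𝒱 ∧ x ∈ V}.ncard ≤ n + 1

/-- An ℝ-quotient map: a continuous surjection such that a real-valued function on the
target is continuous whenever its composition with the map is continuous. -/
def IsRQuotientMap {X : Type u} {Y : Type v} [TopologicalSpace X] [TopologicalSpace Y]
    (p : X → Y) : Prop :=
  Continuous p ∧ Function.Surjective p ∧ ∀ φ : Y → ℝ, Continuous (φ ∘ p) → Continuous φ

/-- A non-P-point: a point having a Gδ set around it which is not a neighborhood of it. -/
def IsNonPPoint {X : Type u} [TopologicalSpace X] (x : X) : Prop :=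
  ∃ s : Set X, IsGδ s ∧ x ∈ s ∧ s ∉ nhds x

/-- The image of a basically disconnected space under a continuous open surjection is
basically disconnected. -/
theorem statement18 {X : Type u} {Y : Type v} [TopologicalSpace X] [TopologicalSpace Y]
    (f : X → Y) (hc : Continuous f) (ho : IsOpenMap f) (hs : Function.Surjective f)
    (hX : IsBasicallyDisconnected X) : IsBasicallyDisconnected Y := by
  intro s ⟨g, hg, hgs⟩
  have hcz : IsCozeroSet (f ⁻¹' s) := ⟨g ∘ f, hg.comp hc, by ext x; simp [hgs]⟩
  have hopen := hX _ hcz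
  have key : closure s = f '' closure (f ⁻¹' s) := by
    apply Set.Subset.antisymm
    · calc closure s = f '' (f ⁻¹' closure s) := (Set.image_preimage_eq _ hs).symm
        _ ⊆ f '' closure (f ⁻¹' s) :=
          Set.image_mono (ho.preimage_closure_subset_closure_preimage)
    · calc f '' closure (f ⁻¹' s) ⊆ closure (f '' (f ⁻¹' s)) :=
          hc.continuousOn.image_closure
        _ = closure s := by rw [Set.image_preimage_eq _ hs]
  rw [key]
  exact ho _ hopen
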